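/- If a sequence τ : ℤ → F with all terms nonzero satisfies the special Somos-7 recurrence τ(n+7)τ(n) = a·τ(n+6)τ(n+1) + b·τ(n+4)τ(n+3), then u(n) = τ(n-3)τ(n+2)/(τ(n-1)τ(n)) satisfies the Lyness recurrence u(n+2)·u(n) = a·u(n+1) + b for all n. -/

import Mathlib

/-- A special Somos-7 sequence yields a solution of the Lyness recurrence. -/
theorem somos7_reduction_lyness {F : Type*} [Field F] (a b : F) (τ : ℤ → F)
    (hτ : ∀ n : ℤ, τ n ≠ 0)
    (hrec : ∀ n : ℤ, τ (n + 7) * τ n = a * (τ (n + 6) * τ (n + 1)) + b * (τ (n + 4) * τ (n + 3)))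
    (u : ℤ → F) (hu : ∀ n : ℤ, u n = τ (n - 3) * τ (n + 2) / (τ (n - 1) * τ n)) :
    ∀ n : ℤ, u (n + 2) * u n = a * u (n + 1) + b := by
  intro n
  have key := hrec (n - 3)
  have e1 : n - 3 + 7 = n + 4 := by ring
  have e2 : n - 3 + 6 = n + 3 := by ring
  have e3 : n - 3 + 1 = n - 2 := by ring
  have e4 : n - 3 + 4 = n + 1 := by ring
  have e5 : n - 3 + 3 = n := by ring
  rw [e1, e2, e3, e4, e5] at key
  rw [hu, hu, hu]
  have e6 : n + 2 - 3 = n - 1 := by ring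
  have e7 : n + 2 + 2 = n + 4 := by ring
  have e8 : n + 2 - 1 = n + 1 := by ring
  have e9 : n + 1 - 3 = n - 2 := by ring
  have e10 : n + 1 + 2 = n + 3 := by ring
  have e11 : n + 1 - 1 = n := by ring
  rw [e6, e7, e8, e9, e10, e11]
  field_simp [hτ]
  linear_combination key
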